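/- In the greedy algorithm over a matroid, for each t ∈ {1,…,K}, every independent subset of U^t has cardinality at most t, where U^t is the set of all elements considered (accepted or rejected by the feasibility check) up to and including the t-th accepted element. -/
import Mathlib


/-- In the greedy algorithm over a matroid, every independent subset of `U^t`
(the elements examined up to and including the `t`-th accepted element) has
cardinality at most `t`. -/
theorem independent_subset_of_examined_card_le {V : Type*} [DecidableEq V]
    (F : Finset V → Prop)
    (hFdown : ∀ S T : Finset V, T ⊆ S → F S → F T)
    (hFexch : ∀ S T : Finset V, F S → F T → S.card < T.card →
      ∃ v ∈ T \ S, F (insert v S))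
    (t : ℕ) (S : ℕ → Finset V) (U : Finset V)
    (hcard : ∀ i ≤ t, (S i).card = i)
    (hF : ∀ i ≤ t, F (S i))
    (hchain : ∀ i j, i ≤ j → j ≤ t → S i ⊆ S j)
    (hSU : S t ⊆ U)
    -- any examined element outside S t was rejected by the feasibility check
    (hrej : ∀ j ∈ U, j ∉ S t → ∃ t' ≤ t, ¬ F (insert j (S t'))) :
    ∀ T : Finset V, T ⊆ U → F T → T.card ≤ t := by
  intro T hTU hFT
  by_contra h
  push_neg at h
  have hcardS : (S t).card = t := hcard t le_rfl
  obtain ⟨v, hv, hvF⟩ := hFexch (S t) T (hF t le_rfl) hFT (by omega)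
  simp only [Finset.mem_sdiff] at hv
  obtain ⟨t', ht', hnF⟩ := hrej v (hTU hv.1) hv.2
  exact hnF (hFdown _ _ (Finset.insert_subset_insert _ (hchain t' t ht' le_rfl)) hvF)
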